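/- Let p be a prime, N ∈ ℕ, and let V be a finite-dimensional ℚ_p-linear subspace of the Tate algebra ℚ_p⟨z_1, …, z_N⟩ of restricted power series. Then there exists a constant c ∈ ℕ, depending only on V, such that every nonzero f ∈ V has Oesterlé degree at most c. Concretely: for every f ∈ V all of whose coefficients c_k satisfy |c_k|_p ≤ 1 and at least one of whose coefficients satisfies |c_k|_p = 1, one has |c_k|_p < 1 for every multi-index k of total degree |k| > c. -/

import Mathlib

open Filter Topology

theorem stmt3 (p : ℕ) [Fact p.Prime] (N : ℕ)
    (V : Submodule ℚ_[p] ((Fin N → ℕ) → ℚ_[p]))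
    [FiniteDimensional ℚ_[p] V]
    (hV : ∀ f ∈ V, Tendsto f cofinite (𝓝 0)) :
    ∃ c : ℕ, ∀ f ∈ V, (∀ k, ‖f k‖ ≤ 1) → (∃ k, ‖f k‖ = 1) →
      ∀ k : Fin N → ℕ, c < ∑ i, k i → ‖f k‖ < 1 := by
  classical
  set n := Module.finrank ℚ_[p] V with hn
  let g : Module.Basis (Fin n) ℚ_[p] V := Module.finBasis ℚ_[p] V
  -- evaluation functionals
  let ev : (Fin N → ℕ) → Module.Dual ℚ_[p] V :=
    fun k => (LinearMap.proj k).comp V.subtype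
  have hev : ∀ k (v : V), ev k v = (v : (Fin N → ℕ) → ℚ_[p]) k := fun _ _ => rfl
  set W : Submodule ℚ_[p] (Module.Dual ℚ_[p] V) :=
    Submodule.span ℚ_[p] (Set.range ev) with hW
  have hco : W.dualCoannihilator = ⊥ := by
    rw [eq_bot_iff]
    intro v hv
    rw [Submodule.mem_dualCoannihilator] at hv
    have hvz : ∀ k, (v : (Fin N → ℕ) → ℚ_[p]) k = 0 := by
      intro k
      exact hv _ (Submodule.subset_span ⟨k, rfl⟩)
    have : (v : (Fin N → ℕ) → ℚ_[p]) = 0 := funext hvz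
    simpa [Submodule.mem_bot] using Subtype.ext this
  have hWtop : W = ⊤ := by
    have h1 := Subspace.finrank_add_finrank_dualCoannihilator_eq W
    rw [hco] at h1
    simp only [finrank_bot, add_zero] at h1
    exact Submodule.eq_top_of_finrank_eq (by rw [h1, Subspace.dual_finrank_eq])
  -- coordinate functionals as combinations of evaluations
  have hcoord : ∀ i : Fin n, ∃ b : (Fin N → ℕ) →₀ ℚ_[p],
      (b.sum fun k a => a • ev k) = g.coord i := by
    intro i
    have : g.coord i ∈ W := hWtop ▸ Submodule.mem_top
    rw [hW, Finsupp.mem_span_range_iff_exists_finsupp] at this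
    exact this
  choose b hb using hcoord
  -- uniform bound on coordinates
  set C : ℝ := 1 + ∑ i : Fin n, ∑ k ∈ (b i).support, ‖b i k‖ with hC
  have hC1 : (1 : ℝ) ≤ C := by
    have : (0 : ℝ) ≤ ∑ i : Fin n, ∑ k ∈ (b i).support, ‖b i k‖ :=
      Finset.sum_nonneg fun i _ => Finset.sum_nonneg fun k _ => norm_nonneg _
    linarith
  have hCpos : (0 : ℝ) < C := lt_of_lt_of_le one_pos hC1
  have hcoord_bound : ∀ (v : V), (∀ k, ‖(v : (Fin N → ℕ) → ℚ_[p]) k‖ ≤ 1) →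
      ∀ i : Fin n, ‖g.coord i v‖ ≤ C := by
    intro v hv i
    rw [← hb i]
    calc ‖((b i).sum fun k a => a • ev k) v‖
        = ‖∑ k ∈ (b i).support, b i k * (v : (Fin N → ℕ) → ℚ_[p]) k‖ := by
          simp [Finsupp.sum, hev, smul_eq_mul]
      _ ≤ ∑ k ∈ (b i).support, ‖b i k * (v : (Fin N → ℕ) → ℚ_[p]) k‖ := norm_sum_le _ _
      _ ≤ ∑ k ∈ (b i).support, ‖b i k‖ := by
          refine Finset.sum_le_sum fun k _ => ?_
          rw [norm_mul]
          calc ‖b i k‖ * ‖(v : (Fin N → ℕ) → ℚ_[p]) k‖ ≤ ‖b i k‖ * 1 :=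
                mul_le_mul_of_nonneg_left (hv k) (norm_nonneg _)
            _ = ‖b i k‖ := mul_one _
      _ ≤ C := by
          rw [hC]
          have : ∑ k ∈ (b i).support, ‖b i k‖ ≤
              ∑ j : Fin n, ∑ k ∈ (b j).support, ‖b j k‖ :=
            Finset.single_le_sum (f := fun j => ∑ k ∈ (b j).support, ‖b j k‖)
              (fun j _ => Finset.sum_nonneg fun k _ => norm_nonneg _) (Finset.mem_univ i)
          linarith
  -- pick the degree bound
  have hp1 : (1 : ℝ) < p := by exact_mod_cast (Fact.out : p.Prime).one_lt
  have hppos : (0 : ℝ) < p := lt_trans one_pos hp1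
  set ε : ℝ := 1 / (p * C) with hε
  have hεpos : 0 < ε := by positivity
  have hfin : ∀ i : Fin n, {k | ε ≤ ‖((g i : (Fin N → ℕ) → ℚ_[p])) k‖}.Finite := by
    intro i
    have := hV (g i) (g i).2
    rw [NormedAddCommGroup.tendsto_nhds_zero] at this
    have h := this ε hεpos
    rw [Filter.eventually_cofinite] at h
    exact h.subset fun k hk => by simpa using not_lt.mpr hk
  obtain ⟨c, hcle⟩ : ∃ c : ℕ, ∀ i : Fin n,
      ((hfin i).toFinset.sup fun k => ∑ j, k j) ≤ c :=
    ⟨Finset.univ.sup fun i : Fin n => (hfin i).toFinset.sup fun k => ∑ j, k j,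
      fun i => Finset.le_sup (f := fun i : Fin n => (hfin i).toFinset.sup fun k => ∑ j, k j) (Finset.mem_univ i)⟩
  refine ⟨c, ?_⟩
  rintro f hf hnorm - k hk
  set v : V := ⟨f, hf⟩ with hv
  have hrepr : f k = ∑ i : Fin n, g.repr v i * (g i : (Fin N → ℕ) → ℚ_[p]) k := by
    have := congrArg (fun w : V => (w : (Fin N → ℕ) → ℚ_[p]) k) (g.sum_repr v)
    simp only [Submodule.coe_sum, Submodule.coe_smul, Finset.sum_apply, Pi.smul_apply, smul_eq_mul] at this
    exact this.symm
  have hterm : ∀ i : Fin n, ‖g.repr v i * (g i : (Fin N → ℕ) → ℚ_[p]) k‖ ≤ 1 / p := by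
    intro i
    have hkdeg : k ∉ (hfin i).toFinset := by
      intro hmem
      have : ∑ j, k j ≤ c := le_trans (Finset.le_sup (f := fun k : Fin N → ℕ => ∑ j, k j) hmem) (hcle i)
      exact absurd hk (not_lt.mpr this)
    have hgk : ‖((g i : (Fin N → ℕ) → ℚ_[p])) k‖ < ε := by
      by_contra h
      exact hkdeg ((hfin i).mem_toFinset.mpr (not_lt.mp h))
    have hci : ‖g.repr v i‖ ≤ C := by
      have := hcoord_bound v hnorm i
      simpa [Module.Basis.coord_apply] using this
    rw [norm_mul]
    calc ‖g.repr v i‖ * ‖((g i : (Fin N → ℕ) → ℚ_[p])) k‖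
        ≤ C * ε := mul_le_mul hci hgk.le (norm_nonneg _) hCpos.le
      _ = 1 / p := by
          rw [hε]; field_simp
  have : ‖f k‖ ≤ 1 / p := by
    rw [hrepr]
    exact IsUltrametricDist.norm_sum_le_of_forall_le_of_nonneg (by positivity) fun i _ => hterm i
  calc ‖f k‖ ≤ 1 / p := this
    _ < 1 := by rw [div_lt_one hppos]; exact hp1
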